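/- arXiv:2208.01980 — 11 statements merged into one kernel-verified Lean document; each statement's English description precedes it below -/
import Mathlib

section
/- Let (S, I, B) : [0, t₀] → ℝ be a differentiable solution of the system S' = ω − βSB − γS − μ₁S, I' = βSB − δI − μ₁I, B' = αI − yB − μ₂B with positive parameters and S(0) > 0, I(0) > 0, B(0) > 0. Then S(t) > 0, I(t) > 0, and B(t) > 0 for all t ∈ [0, t₀]. -/
open Set Filter Topology

/-- Positivity of solutions of the leprosy within-host model on `[0, t₀]`
when the initial data are positive. -/
theorem leprosy_positivity
    (ω β γ μ₁ δ α y μ₂ t₀ : ℝ)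
    (hω : 0 < ω) (hβ : 0 < β) (hγ : 0 < γ) (hμ₁ : 0 < μ₁)
    (hδ : 0 < δ) (hα : 0 < α) (hy : 0 < y) (hμ₂ : 0 < μ₂)
    (S I B : ℝ → ℝ)
    (hS : ∀ t ∈ Set.Icc (0 : ℝ) t₀,
      HasDerivAt S (ω - β * S t * B t - γ * S t - μ₁ * S t) t)
    (hI : ∀ t ∈ Set.Icc (0 : ℝ) t₀,
      HasDerivAt I (β * S t * B t - δ * I t - μ₁ * I t) t)
    (hB : ∀ t ∈ Set.Icc (0 : ℝ) t₀,
      HasDerivAt B (α * I t - y * B t - μ₂ * B t) t)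
    (hS0 : 0 < S 0) (hI0 : 0 < I 0) (hB0 : 0 < B 0) :
    ∀ t ∈ Set.Icc (0 : ℝ) t₀, 0 < S t ∧ 0 < I t ∧ 0 < B t := by
  by_contra hcon
  push_neg at hcon
  obtain ⟨t₁, ht₁, ht₁'⟩ := hcon
  set E : Set ℝ := {t | t ∈ Set.Icc (0:ℝ) t₀ ∧ (S t ≤ 0 ∨ I t ≤ 0 ∨ B t ≤ 0)} with hEdef
  have hmemE : ∀ t, t ∈ Set.Icc (0:ℝ) t₀ → ¬ (0 < S t ∧ 0 < I t ∧ 0 < B t) → t ∈ E := by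
    intro t ht h
    refine ⟨ht, ?_⟩
    rcases le_or_gt (S t) 0 with h1 | h1
    · exact Or.inl h1
    rcases le_or_gt (I t) 0 with h2 | h2
    · exact Or.inr (Or.inl h2)
    rcases le_or_gt (B t) 0 with h3 | h3
    · exact Or.inr (Or.inr h3)
    exact absurd ⟨h1, h2, h3⟩ h
  have hEne : E.Nonempty := by
    refine ⟨t₁, hmemE t₁ ht₁ ?_⟩
    intro h
    exact absurd h.2.2 (not_lt.2 (ht₁' h.1 h.2.1))
  -- continuity
  have hcS : ContinuousOn S (Set.Icc 0 t₀) := fun t ht => ((hS t ht).continuousAt).continuousWithinAt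
  have hcI : ContinuousOn I (Set.Icc 0 t₀) := fun t ht => ((hI t ht).continuousAt).continuousWithinAt
  have hcB : ContinuousOn B (Set.Icc 0 t₀) := fun t ht => ((hB t ht).continuousAt).continuousWithinAt
  -- E is closed
  have hEclosed : IsClosed E := by
    have : E = (Set.Icc 0 t₀ ∩ S ⁻¹' Set.Iic 0) ∪
        ((Set.Icc 0 t₀ ∩ I ⁻¹' Set.Iic 0) ∪ (Set.Icc 0 t₀ ∩ B ⁻¹' Set.Iic 0)) := by
      ext t
      simp only [hEdef, Set.mem_setOf_eq, Set.mem_union, Set.mem_inter_iff, Set.mem_preimage,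
        Set.mem_Iic]
      tauto
    rw [this]
    exact ((hcS.preimage_isClosed_of_isClosed isClosed_Icc isClosed_Iic).union
      ((hcI.preimage_isClosed_of_isClosed isClosed_Icc isClosed_Iic).union
        (hcB.preimage_isClosed_of_isClosed isClosed_Icc isClosed_Iic)))
  have hbdd : BddBelow E := ⟨0, fun x hx => hx.1.1⟩
  set T : ℝ := sInf E with hTdef
  have hTE : T ∈ E := hEclosed.csInf_mem hEne hbdd
  have hT0 : 0 < T := by
    rcases lt_or_eq_of_le (le_csInf hEne fun x hx => hx.1.1) with h | h
    · exact h
    exfalso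
    have h0E : (0:ℝ) ∈ E := by rw [h]; exact hTE
    rcases h0E.2 with h' | h' | h' <;> linarith
  have hTt₀ : T ≤ t₀ := hTE.1.2
  have hsub : Set.Icc (0:ℝ) T ⊆ Set.Icc 0 t₀ := Set.Icc_subset_Icc le_rfl hTt₀
  -- strict positivity before T
  have hpos : ∀ t ∈ Set.Ico (0:ℝ) T, 0 < S t ∧ 0 < I t ∧ 0 < B t := by
    intro t ht
    by_contra h
    have htE : t ∈ E := hmemE t ⟨ht.1, ht.2.le.trans hTt₀⟩ h
    exact absurd (csInf_le hbdd htE) (not_le.2 ht.2)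
  -- Gronwall-type positivity for I at T
  have hIT : 0 < I T := by
    set a : ℝ := δ + μ₁ with hadef
    set f : ℝ → ℝ := fun t => Real.exp (a * t) * I t with hfdef
    have hf' : ∀ t ∈ Set.Icc (0:ℝ) t₀,
        HasDerivAt f (Real.exp (a * t) * (β * S t * B t)) t := by
      intro t ht
      have h1 : HasDerivAt (fun s : ℝ => Real.exp (a * s)) (Real.exp (a * t) * a) t := by
        simpa [Function.comp_def] using (Real.hasDerivAt_exp (a * t)).comp t ((hasDerivAt_id t).const_mul a)
      have h2 := h1.mul (hI t ht)
      exact h2.congr_deriv (by simp only [hadef]; ring)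
    have hmono : MonotoneOn f (Set.Icc 0 T) := by
      apply monotoneOn_of_deriv_nonneg (convex_Icc 0 T)
      · exact fun t ht => ((hf' t (hsub ht)).continuousAt).continuousWithinAt
      · intro t ht
        rw [interior_Icc] at ht
        exact ((hf' t (hsub (Set.Ioo_subset_Icc_self ht))).differentiableAt).differentiableWithinAt
      · intro t ht
        rw [interior_Icc] at ht
        rw [(hf' t (hsub (Set.Ioo_subset_Icc_self ht))).deriv]
        obtain ⟨h1, h2, h3⟩ := hpos t ⟨ht.1.le, ht.2⟩
        positivity
    have h01 := hmono (Set.left_mem_Icc.2 hT0.le) (Set.right_mem_Icc.2 hT0.le) hT0.le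
    simp only [hfdef, mul_zero, Real.exp_zero, one_mul] at h01
    nlinarith [Real.exp_pos (a * T), hI0]
  -- Gronwall-type positivity for B at T
  have hBT : 0 < B T := by
    set b : ℝ := y + μ₂ with hbdef
    set g : ℝ → ℝ := fun t => Real.exp (b * t) * B t with hgdef
    have hg' : ∀ t ∈ Set.Icc (0:ℝ) t₀,
        HasDerivAt g (Real.exp (b * t) * (α * I t)) t := by
      intro t ht
      have h1 : HasDerivAt (fun s : ℝ => Real.exp (b * s)) (Real.exp (b * t) * b) t := by
        simpa [Function.comp_def] using (Real.hasDerivAt_exp (b * t)).comp t ((hasDerivAt_id t).const_mul b)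
      have h2 := h1.mul (hB t ht)
      exact h2.congr_deriv (by simp only [hbdef]; ring)
    have hmono : MonotoneOn g (Set.Icc 0 T) := by
      apply monotoneOn_of_deriv_nonneg (convex_Icc 0 T)
      · exact fun t ht => ((hg' t (hsub ht)).continuousAt).continuousWithinAt
      · intro t ht
        rw [interior_Icc] at ht
        exact ((hg' t (hsub (Set.Ioo_subset_Icc_self ht))).differentiableAt).differentiableWithinAt
      · intro t ht
        rw [interior_Icc] at ht
        rw [(hg' t (hsub (Set.Ioo_subset_Icc_self ht))).deriv]
        obtain ⟨h1, h2, h3⟩ := hpos t ⟨ht.1.le, ht.2⟩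
        positivity
    have h01 := hmono (Set.left_mem_Icc.2 hT0.le) (Set.right_mem_Icc.2 hT0.le) hT0.le
    simp only [hgdef, mul_zero, Real.exp_zero, one_mul] at h01
    nlinarith [Real.exp_pos (b * T), hB0]
  -- hence S T ≤ 0
  have hSTle : S T ≤ 0 := by
    rcases hTE.2 with h | h | h
    · exact h
    · linarith
    · linarith
  -- S T ≥ 0 by continuity from the left
  have hneBot : (𝓝[Set.Ioo (0:ℝ) T] T).NeBot := by
    rw [← mem_closure_iff_nhdsWithin_neBot, closure_Ioo hT0.ne]
    exact Set.right_mem_Icc.2 hT0.le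
  have htendS : Tendsto S (𝓝[Set.Ioo (0:ℝ) T] T) (𝓝 (S T)) :=
    ((hS T hTE.1).continuousAt).tendsto.mono_left nhdsWithin_le_nhds
  have hST0 : 0 ≤ S T := by
    refine ge_of_tendsto htendS (eventually_nhdsWithin_of_forall fun t ht => ?_)
    exact (hpos t ⟨ht.1.le, ht.2⟩).1.le
  have hST : S T = 0 := le_antisymm hSTle hST0
  -- derivative contradiction at T
  have hd := hS T hTE.1
  rw [hasDerivAt_iff_tendsto_slope] at hd
  have hd' : Tendsto (slope S T) (𝓝[Set.Ioo (0:ℝ) T] T)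
      (𝓝 (ω - β * S T * B T - γ * S T - μ₁ * S T)) :=
    hd.mono_left (nhdsWithin_mono T fun x hx => ne_of_lt hx.2)
  have hval : ω - β * S T * B T - γ * S T - μ₁ * S T = ω := by rw [hST]; ring
  rw [hval] at hd'
  have hle : ω ≤ 0 := by
    refine le_of_tendsto hd' (eventually_nhdsWithin_of_forall fun t ht => ?_)
    have hSt : 0 < S t := (hpos t ⟨ht.1.le, ht.2⟩).1
    rw [slope_def_field, hST, sub_zero]
    apply div_nonpos_of_nonneg_of_nonpos hSt.le
    linarith [ht.2]
  linarith
end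

section
/- Let (S, I, B) : [0, t₀] → ℝ be a differentiable solution of the system S' = ω − βSB − γS − μ₁S, I' = βSB − δI − μ₁I, B' = αI − yB − μ₂B with positive parameters, and suppose S(t) ≥ 0 and B(t) ≥ 0 for all t ∈ [0, t₀]. Then for all t ∈ [0, t₀] one has the exponential lower bounds I(t) ≥ I(0)·e^{−(δ+μ₁)t}, and, if additionally I(t) ≥ 0 on [0, t₀], B(t) ≥ B(0)·e^{−(y+μ₂)t}. -/
lemma gronwall_lower_aux (k t₀ : ℝ) (f g : ℝ → ℝ)
    (hf : ∀ t ∈ Set.Icc (0 : ℝ) t₀, HasDerivAt f (g t - k * f t) t)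
    (hg : ∀ t ∈ Set.Icc (0 : ℝ) t₀, 0 ≤ g t) :
    ∀ t ∈ Set.Icc (0 : ℝ) t₀, f 0 * Real.exp (-k * t) ≤ f t := by
  set F : ℝ → ℝ := fun t => f t * Real.exp (k * t) with hFdef
  have hF : ∀ t ∈ Set.Icc (0 : ℝ) t₀,
      HasDerivAt F (g t * Real.exp (k * t)) t := by
    intro t ht
    have he : HasDerivAt (fun t => Real.exp (k * t)) (Real.exp (k * t) * k) t :=
      by simpa using ((hasDerivAt_id t).const_mul k).exp
    have : HasDerivAt (fun y => f y * Real.exp (k * y))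
        ((g t - k * f t) * Real.exp (k * t) + f t * (Real.exp (k * t) * k)) t :=
      (hf t ht).mul he
    convert this using 1
    ring
  have hmono : MonotoneOn F (Set.Icc 0 t₀) := by
    apply monotoneOn_of_deriv_nonneg (convex_Icc 0 t₀)
    · exact fun t ht => (hF t ht).continuousAt.continuousWithinAt
    · rw [interior_Icc]
      exact fun t ht => ((hF t (Set.Ioo_subset_Icc_self ht)).differentiableAt).differentiableWithinAt
    · rw [interior_Icc]
      intro t ht
      rw [(hF t (Set.Ioo_subset_Icc_self ht)).deriv]
      exact mul_nonneg (hg t (Set.Ioo_subset_Icc_self ht)) (Real.exp_nonneg _)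
  intro t ht
  have h0 : (0 : ℝ) ∈ Set.Icc (0 : ℝ) t₀ := ⟨le_refl 0, le_trans ht.1 ht.2⟩
  have hF0 : f 0 ≤ f t * Real.exp (k * t) := by
    have := hmono h0 ht ht.1
    simpa [F] using this
  have := mul_le_mul_of_nonneg_right hF0 (Real.exp_nonneg (-k * t))
  have heq : f t * Real.exp (k * t) * Real.exp (-k * t) = f t := by
    rw [mul_assoc, ← Real.exp_add]
    simp [show k * t + -k * t = 0 by ring]
  linarith [this, heq ▸ this]

/-- Exponential lower bounds for `I` and `B` along solutions of the leprosy model: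
`I t ≥ I 0 * exp (-(δ+μ₁) t)`, and if moreover `I ≥ 0` on the interval then
`B t ≥ B 0 * exp (-(y+μ₂) t)`. -/
theorem leprosy_exponential_lower_bounds
    (ω β γ μ₁ δ α y μ₂ t₀ : ℝ)
    (hω : 0 < ω) (hβ : 0 < β) (hγ : 0 < γ) (hμ₁ : 0 < μ₁)
    (hδ : 0 < δ) (hα : 0 < α) (hy : 0 < y) (hμ₂ : 0 < μ₂)
    (S I B : ℝ → ℝ)
    (hS : ∀ t ∈ Set.Icc (0 : ℝ) t₀,
      HasDerivAt S (ω - β * S t * B t - γ * S t - μ₁ * S t) t)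
    (hI : ∀ t ∈ Set.Icc (0 : ℝ) t₀,
      HasDerivAt I (β * S t * B t - δ * I t - μ₁ * I t) t)
    (hB : ∀ t ∈ Set.Icc (0 : ℝ) t₀,
      HasDerivAt B (α * I t - y * B t - μ₂ * B t) t)
    (hSnn : ∀ t ∈ Set.Icc (0 : ℝ) t₀, 0 ≤ S t)
    (hBnn : ∀ t ∈ Set.Icc (0 : ℝ) t₀, 0 ≤ B t) :
    (∀ t ∈ Set.Icc (0 : ℝ) t₀, I 0 * Real.exp (-(δ + μ₁) * t) ≤ I t) ∧
    ((∀ t ∈ Set.Icc (0 : ℝ) t₀, 0 ≤ I t) →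
      ∀ t ∈ Set.Icc (0 : ℝ) t₀, B 0 * Real.exp (-(y + μ₂) * t) ≤ B t) := by
  constructor
  · apply gronwall_lower_aux (δ + μ₁) t₀ I (fun t => β * S t * B t)
    · intro t ht
      have := hI t ht
      convert this using 1
      ring
    · intro t ht
      exact mul_nonneg (mul_nonneg hβ.le (hSnn t ht)) (hBnn t ht)
  · intro hInn
    apply gronwall_lower_aux (y + μ₂) t₀ B (fun t => α * I t)
    · intro t ht
      have := hB t ht
      convert this using 1
      ring
    · intro t ht
      exact mul_nonneg hα.le (hInn t ht)
end

section
/- Let (S, I, B) : [0, ∞) → ℝ be a differentiable solution of the system S' = ω − βSB − γS − μ₁S, I' = βSB − δI − μ₁I, B' = αI − yB − μ₂B with positive parameters, such that S(t) ≥ 0, I(t) ≥ 0, B(t) ≥ 0 for all t ≥ 0. Set k = min{γ + μ₁, δ + μ₁}. Then for all t ≥ 0, S(t) + I(t) ≤ ω/k + (S(0) + I(0) − ω/k)·e^{−kt}. -/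
/-- Boundedness estimate for `S + I`:
`S t + I t ≤ ω/k + (S 0 + I 0 - ω/k) * exp (-k t)` with `k = min (γ+μ₁) (δ+μ₁)`. -/
theorem leprosy_S_plus_I_bound
    (ω β γ μ₁ δ α y μ₂ : ℝ)
    (hω : 0 < ω) (hβ : 0 < β) (hγ : 0 < γ) (hμ₁ : 0 < μ₁)
    (hδ : 0 < δ) (hα : 0 < α) (hy : 0 < y) (hμ₂ : 0 < μ₂)
    (S I B : ℝ → ℝ)
    (hS : ∀ t ∈ Set.Ici (0 : ℝ),
      HasDerivAt S (ω - β * S t * B t - γ * S t - μ₁ * S t) t)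
    (hI : ∀ t ∈ Set.Ici (0 : ℝ),
      HasDerivAt I (β * S t * B t - δ * I t - μ₁ * I t) t)
    (hB : ∀ t ∈ Set.Ici (0 : ℝ),
      HasDerivAt B (α * I t - y * B t - μ₂ * B t) t)
    (hSnn : ∀ t ∈ Set.Ici (0 : ℝ), 0 ≤ S t)
    (hInn : ∀ t ∈ Set.Ici (0 : ℝ), 0 ≤ I t)
    (hBnn : ∀ t ∈ Set.Ici (0 : ℝ), 0 ≤ B t)
    (k : ℝ) (hk : k = min (γ + μ₁) (δ + μ₁)) :
    ∀ t ∈ Set.Ici (0 : ℝ),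
      S t + I t ≤ ω / k + (S 0 + I 0 - ω / k) * Real.exp (-k * t) := by
  have hk0 : 0 < k := by
    rw [hk]; exact lt_min (by linarith) (by linarith)
  set c := ω / k with hc
  have hkc : k * c = ω := by
    rw [hc]; field_simp
  set F : ℝ → ℝ := fun u => (S u + I u - c) * Real.exp (k * u) with hF
  have hFd : ∀ s ∈ Set.Ici (0 : ℝ),
      HasDerivAt F ((ω - (γ + μ₁) * S s - (δ + μ₁) * I s) * Real.exp (k * s)
        + (S s + I s - c) * (k * Real.exp (k * s))) s := by
    intro s hs
    have h1 : HasDerivAt (fun u => S u + I u - c)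
        ((ω - β * S s * B s - γ * S s - μ₁ * S s) + (β * S s * B s - δ * I s - μ₁ * I s)) s :=
      (((hS s hs).add (hI s hs)).sub_const c)
    have h2 : HasDerivAt (fun u => Real.exp (k * u)) (k * Real.exp (k * s)) s := by
      have := (Real.hasDerivAt_exp (k * s)).comp s ((hasDerivAt_id s).const_mul k)
      simpa [mul_comm, Function.comp_def] using this
    have := h1.mul h2
    refine this.congr_deriv ?_
    ring
  have hderiv : ∀ x ∈ interior (Set.Ici (0 : ℝ)), deriv F x ≤ 0 := by
    intro x hx
    rw [interior_Ici] at hx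
    have hx' : x ∈ Set.Ici (0 : ℝ) := Set.Ioi_subset_Ici_self hx
    rw [(hFd x hx').deriv]
    have hSx := hSnn x hx'
    have hIx := hInn x hx'
    have hkle1 : k ≤ γ + μ₁ := hk ▸ min_le_left _ _
    have hkle2 : k ≤ δ + μ₁ := hk ▸ min_le_right _ _
    have hexp : 0 < Real.exp (k * x) := Real.exp_pos _
    have : (ω - (γ + μ₁) * S x - (δ + μ₁) * I x) * Real.exp (k * x)
        + (S x + I x - c) * (k * Real.exp (k * x))
        = (-(γ + μ₁ - k) * S x - (δ + μ₁ - k) * I x + (ω - k * c)) * Real.exp (k * x) := by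
      ring
    rw [this, hkc, sub_self, add_zero]
    apply mul_nonpos_of_nonpos_of_nonneg _ hexp.le
    nlinarith
  have hcont : ContinuousOn F (Set.Ici (0 : ℝ)) :=
    fun s hs => ((hFd s hs).continuousAt).continuousWithinAt
  have hanti : AntitoneOn F (Set.Ici (0 : ℝ)) :=
    antitoneOn_of_deriv_nonpos (convex_Ici 0) hcont
      (fun x hx => ((hFd x (interior_subset hx)).differentiableAt.differentiableWithinAt))
      hderiv
  intro t ht
  have h0 : (0 : ℝ) ∈ Set.Ici (0 : ℝ) := Set.self_mem_Ici
  have hle := hanti h0 ht ht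
  have hF0 : F 0 = S 0 + I 0 - c := by simp [hF]
  rw [hF0] at hle
  have hFt : F t = (S t + I t - c) * Real.exp (k * t) := rfl
  rw [hFt] at hle
  have h2 := mul_le_mul_of_nonneg_right hle (Real.exp_pos (-(k * t))).le
  rw [mul_assoc, ← Real.exp_add, add_neg_cancel, Real.exp_zero, mul_one] at h2
  rw [neg_mul] at *
  linarith
end

section
/- Let (S, I, B) : [0, ∞) → ℝ be a differentiable solution of the system S' = ω − βSB − γS − μ₁S, I' = βSB − δI − μ₁I, B' = αI − yB − μ₂B with positive parameters, such that S(t) ≥ 0, I(t) ≥ 0, B(t) ≥ 0 for all t ≥ 0, and set k = min{γ + μ₁, δ + μ₁}. Then limsup_{t→∞} (S(t) + I(t)) ≤ ω/k; in particular S and I are bounded on [0, ∞). -/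
/-- `limsup (S + I) ≤ ω/k` as `t → ∞`, with `k = min (γ+μ₁) (δ+μ₁)`; in particular
`S` and `I` are bounded on `[0, ∞)`. -/
theorem leprosy_S_plus_I_limsup
    (ω β γ μ₁ δ α y μ₂ : ℝ)
    (hω : 0 < ω) (hβ : 0 < β) (hγ : 0 < γ) (hμ₁ : 0 < μ₁)
    (hδ : 0 < δ) (hα : 0 < α) (hy : 0 < y) (hμ₂ : 0 < μ₂)
    (S I B : ℝ → ℝ)
    (hS : ∀ t ∈ Set.Ici (0 : ℝ),
      HasDerivAt S (ω - β * S t * B t - γ * S t - μ₁ * S t) t)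
    (hI : ∀ t ∈ Set.Ici (0 : ℝ),
      HasDerivAt I (β * S t * B t - δ * I t - μ₁ * I t) t)
    (hB : ∀ t ∈ Set.Ici (0 : ℝ),
      HasDerivAt B (α * I t - y * B t - μ₂ * B t) t)
    (hSnn : ∀ t ∈ Set.Ici (0 : ℝ), 0 ≤ S t)
    (hInn : ∀ t ∈ Set.Ici (0 : ℝ), 0 ≤ I t)
    (hBnn : ∀ t ∈ Set.Ici (0 : ℝ), 0 ≤ B t)
    (k : ℝ) (hk : k = min (γ + μ₁) (δ + μ₁)) :
    Filter.limsup (fun t => S t + I t) Filter.atTop ≤ ω / k ∧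
    (∃ M : ℝ, ∀ t ∈ Set.Ici (0 : ℝ), |S t| ≤ M ∧ |I t| ≤ M) := by
  have hk0 : 0 < k := by
    rw [hk]; exact lt_min (by linarith) (by linarith)
  set N : ℝ → ℝ := fun t => S t + I t with hN
  set c : ℝ := ω / k with hc
  set h : ℝ → ℝ := fun t => (N t - c) * Real.exp (k * t) with hh
  -- derivative of h on Ici 0
  have hderiv : ∀ t ∈ Set.Ici (0 : ℝ),
      HasDerivAt h (((ω - (γ + μ₁) * S t - (δ + μ₁) * I t) + k * N t - ω)
        * Real.exp (k * t)) t := by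
    intro t ht
    have hN' : HasDerivAt N (ω - (γ + μ₁) * S t - (δ + μ₁) * I t) t := by
      have := (hS t ht).add (hI t ht)
      refine this.congr_deriv ?_; ring
    have hexp : HasDerivAt (fun t => Real.exp (k * t)) (k * Real.exp (k * t)) t := by
      have := (Real.hasDerivAt_exp (k * t)).comp t ((hasDerivAt_id t).const_mul k)
      exact this.congr_deriv (by ring)
    have := (hN'.sub_const c).mul hexp
    refine this.congr_deriv ?_
    have : c * k = ω := by
      rw [hc]; field_simp
    rw [← this]
    ring
  have hderiv_nonpos : ∀ t ∈ Set.Ici (0 : ℝ),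
      ((ω - (γ + μ₁) * S t - (δ + μ₁) * I t) + k * N t - ω) * Real.exp (k * t) ≤ 0 := by
    intro t ht
    apply mul_nonpos_of_nonpos_of_nonneg _ (Real.exp_nonneg _)
    have h1 : k ≤ γ + μ₁ := by rw [hk]; exact min_le_left _ _
    have h2 : k ≤ δ + μ₁ := by rw [hk]; exact min_le_right _ _
    have := hSnn t ht
    have := hInn t ht
    simp only [hN]
    nlinarith
  have hanti : AntitoneOn h (Set.Ici (0 : ℝ)) := by
    apply antitoneOn_of_deriv_nonpos (convex_Ici 0)
    · intro t ht
      exact (hderiv t ht).continuousAt.continuousWithinAt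
    · intro t ht
      rw [interior_Ici] at ht
      exact (hderiv t (Set.mem_Ici.mpr (le_of_lt ht))).differentiableAt.differentiableWithinAt
    · intro t ht
      rw [interior_Ici] at ht
      rw [(hderiv t (Set.mem_Ici.mpr (le_of_lt ht))).deriv]
      exact hderiv_nonpos t (Set.mem_Ici.mpr (le_of_lt ht))
  -- key pointwise bound: N t ≤ c + (N 0 - c) * exp (-k t) for t ≥ 0
  have hbound : ∀ t ∈ Set.Ici (0 : ℝ), N t ≤ c + (N 0 - c) * Real.exp (-(k * t)) := by
    intro t ht
    have := hanti (Set.self_mem_Ici) ht ht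
    simp only [hh, mul_zero, Real.exp_zero, mul_one] at this
    have hexp : (0:ℝ) < Real.exp (k * t) := Real.exp_pos _
    rw [Real.exp_neg]
    have h2 : N t - c ≤ (N 0 - c) * (Real.exp (k * t))⁻¹ := by
      rw [← div_eq_mul_inv, le_div_iff₀ hexp]; exact this
    linarith
  constructor
  · -- limsup bound
    set g : ℝ → ℝ := fun t => c + (N 0 - c) * Real.exp (-(k * t)) with hg
    have hgtend : Filter.Tendsto g Filter.atTop (nhds c) := by
      have hexp : Filter.Tendsto (fun t : ℝ => Real.exp (-(k * t))) Filter.atTop (nhds 0) := by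
        apply Real.tendsto_exp_atBot.comp
        apply Filter.tendsto_neg_atBot_iff.mpr
        exact Filter.Tendsto.const_mul_atTop hk0 Filter.tendsto_id
      have := ((hexp.const_mul (N 0 - c)).const_add c)
      simpa using this
    have hle : ∀ᶠ t in Filter.atTop, N t ≤ g t := by
      filter_upwards [Filter.eventually_ge_atTop (0:ℝ)] with t ht
      exact hbound t ht
    have hcob : Filter.IsCoboundedUnder (· ≤ ·) Filter.atTop N := by
      have hb : Filter.IsBoundedUnder (· ≥ ·) Filter.atTop N := by
        refine ⟨0, ?_⟩
        rw [Filter.eventually_map]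
        filter_upwards [Filter.eventually_ge_atTop (0:ℝ)] with t ht
        have := hSnn t ht; have := hInn t ht
        simp only [hN]; linarith
      exact hb.isCoboundedUnder_le
    have hbd : Filter.IsBoundedUnder (· ≤ ·) Filter.atTop g :=
      hgtend.isBoundedUnder_le
    calc Filter.limsup N Filter.atTop ≤ Filter.limsup g Filter.atTop :=
          Filter.limsup_le_limsup hle hcob hbd
      _ = c := hgtend.limsup_eq
  · -- boundedness
    refine ⟨c + |N 0 - c|, fun t ht => ?_⟩
    have hNle : N t ≤ c + |N 0 - c| := by
      refine (hbound t ht).trans ?_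
      gcongr
      calc (N 0 - c) * Real.exp (-(k * t)) ≤ |N 0 - c| * Real.exp (-(k * t)) := by
            apply mul_le_mul_of_nonneg_right (le_abs_self _) (Real.exp_nonneg _)
        _ ≤ |N 0 - c| * 1 := by
            apply mul_le_mul_of_nonneg_left _ (abs_nonneg _)
            apply Real.exp_le_one_iff.mpr
            exact neg_nonpos.mpr (mul_nonneg hk0.le ht)
        _ = |N 0 - c| := mul_one _
    have hSt := hSnn t ht
    have hIt := hInn t ht
    constructor
    · rw [abs_of_nonneg hSt]; simp only [hN] at hNle; linarith
    · rw [abs_of_nonneg hIt]; simp only [hN] at hNle; linarith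
end

section
/- With positive parameters ω, β, γ, μ₁, δ, α, y, μ₂ and R₀ = αβω/((γ+μ₁)(δ+μ₁)(y+μ₂)), define S* = (δ+μ₁)(y+μ₂)/(αβ), I* = (γ+μ₁)(y+μ₂)(R₀ − 1)/(αβ), B* = (γ+μ₁)(R₀ − 1)/β. Then (S*, I*, B*) is an equilibrium of the system: substituting these values into the right-hand sides ω − βSB − γS − μ₁S, βSB − δI − μ₁I, and αI − yB − μ₂B gives zero in each component. Moreover S* > 0 always, and I* > 0 and B* > 0 if and only if R₀ > 1. -/
/-- The infected point `E* = (S*, I*, B*)` is an equilibrium of the leprosy model;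
`S* > 0` always, and `I* > 0 ∧ B* > 0 ↔ R₀ > 1`. -/
theorem leprosy_infected_equilibrium
    (ω β γ μ₁ δ α y μ₂ : ℝ)
    (hω : 0 < ω) (hβ : 0 < β) (hγ : 0 < γ) (hμ₁ : 0 < μ₁)
    (hδ : 0 < δ) (hα : 0 < α) (hy : 0 < y) (hμ₂ : 0 < μ₂)
    (R₀ : ℝ) (hR₀ : R₀ = α * β * ω / ((γ + μ₁) * (δ + μ₁) * (y + μ₂)))
    (Sstar Istar Bstar : ℝ)
    (hSstar : Sstar = (δ + μ₁) * (y + μ₂) / (α * β))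
    (hIstar : Istar = (γ + μ₁) * (y + μ₂) * (R₀ - 1) / (α * β))
    (hBstar : Bstar = (γ + μ₁) * (R₀ - 1) / β) :
    (ω - β * Sstar * Bstar - γ * Sstar - μ₁ * Sstar = 0 ∧
     β * Sstar * Bstar - δ * Istar - μ₁ * Istar = 0 ∧
     α * Istar - y * Bstar - μ₂ * Bstar = 0) ∧
    0 < Sstar ∧
    ((0 < Istar ∧ 0 < Bstar) ↔ 1 < R₀) := by
  have h1 : (0:ℝ) < γ + μ₁ := by linarith
  have h2 : (0:ℝ) < δ + μ₁ := by linarith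
  have h3 : (0:ℝ) < y + μ₂ := by linarith
  have h4 : (0:ℝ) < α * β := mul_pos hα hβ
  subst hSstar hIstar hBstar
  refine ⟨⟨?_, ?_, ?_⟩, ?_, ?_⟩
  · subst hR₀; field_simp; ring
  · subst hR₀; field_simp; ring
  · subst hR₀; field_simp; ring
  · positivity
  · constructor
    · rintro ⟨hI, -⟩
      rw [div_pos_iff] at hI
      rcases hI with ⟨h, -⟩ | ⟨-, h⟩
      · nlinarith [mul_pos h1 h3]
      · linarith
    · intro hR
      have hR1 : 0 < R₀ - 1 := by linarith
      exact ⟨div_pos (mul_pos (mul_pos h1 h3) hR1) h4,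
             div_pos (mul_pos h1 hR1) hβ⟩
end

section
/- With positive parameters ω, β, γ, μ₁, δ, α, y, μ₂ and R₀ = αβω/((γ+μ₁)(δ+μ₁)(y+μ₂)), every equilibrium (S, I, B) ∈ ℝ³ of the system (i.e. every point where all three right-hand sides vanish) with B ≠ 0 equals the infected equilibrium E* = ((δ+μ₁)(y+μ₂)/(αβ), (γ+μ₁)(y+μ₂)(R₀−1)/(αβ), (γ+μ₁)(R₀−1)/β), and every equilibrium with B = 0 equals the disease-free equilibrium E₀ = (ω/(γ+μ₁), 0, 0). Hence the system has exactly these two equilibria (which coincide when R₀ = 1). -/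
/-- Classification of equilibria of the leprosy model: any equilibrium with
`B ≠ 0` equals the infected equilibrium `E*`, and any equilibrium with `B = 0`
equals the disease-free equilibrium `E₀`. -/
theorem leprosy_equilibria_classification
    (ω β γ μ₁ δ α y μ₂ : ℝ)
    (hω : 0 < ω) (hβ : 0 < β) (hγ : 0 < γ) (hμ₁ : 0 < μ₁)
    (hδ : 0 < δ) (hα : 0 < α) (hy : 0 < y) (hμ₂ : 0 < μ₂)
    (R₀ : ℝ) (hR₀ : R₀ = α * β * ω / ((γ + μ₁) * (δ + μ₁) * (y + μ₂))) :
    ∀ S I B : ℝ,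
      (ω - β * S * B - γ * S - μ₁ * S = 0 ∧
       β * S * B - δ * I - μ₁ * I = 0 ∧
       α * I - y * B - μ₂ * B = 0) →
      (B ≠ 0 →
        (S, I, B) = ((δ + μ₁) * (y + μ₂) / (α * β),
                     (γ + μ₁) * (y + μ₂) * (R₀ - 1) / (α * β),
                     (γ + μ₁) * (R₀ - 1) / β)) ∧
      (B = 0 → (S, I, B) = (ω / (γ + μ₁), 0, 0)) := by
  intro S I B ⟨h1, h2, h3⟩
  have hαβ : α * β ≠ 0 := by positivity
  have hβ' : (β : ℝ) ≠ 0 := ne_of_gt hβ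
  have hγμ : γ + μ₁ ≠ 0 := by positivity
  have hδμ : δ + μ₁ ≠ 0 := by positivity
  have hyμ : y + μ₂ ≠ 0 := by positivity
  constructor
  · intro hB
    have hS : S = (δ + μ₁) * (y + μ₂) / (α * β) := by
      have key : S * (α * β) * B = (δ + μ₁) * (y + μ₂) * B := by nlinarith [h2, h3]
      field_simp
      exact mul_right_cancel₀ hB (by rw [mul_assoc S α β]; exact key)
    have hBval : B = (γ + μ₁) * (R₀ - 1) / β := by
      subst hS hR₀
      field_simp at h1 ⊢
      ring_nf at h1 ⊢
      nlinarith [h1]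
    have hI : I = (γ + μ₁) * (y + μ₂) * (R₀ - 1) / (α * β) := by
      have : α * I = (y + μ₂) * B := by linarith
      rw [hBval] at this
      field_simp at this ⊢
      nlinarith [this]
    rw [hS, hI, hBval]
  · intro hB
    subst hB
    have hI : I = 0 := by
      have : α * I = 0 := by linarith
      exact (mul_eq_zero.mp this).resolve_left (ne_of_gt hα)
    have hS : S = ω / (γ + μ₁) := by
      field_simp
      nlinarith [h1]
    rw [hS, hI]
end

section
/- Let J₀ be the 3×3 real matrix with rows (−(γ+μ₁), 0, −βω/(γ+μ₁)), (0, −(δ+μ₁), βω/(γ+μ₁)), (0, α, −(y+μ₂)), where all parameters are positive. Then the characteristic polynomial of J₀ (in the variable λ) equals (−(γ+μ₁) − λ)·(λ² + ((δ+μ₁) + (y+μ₂))λ + (δ+μ₁)(y+μ₂)(1 − R₀)), where R₀ = αβω/((γ+μ₁)(δ+μ₁)(y+μ₂)). -/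
/-- The characteristic polynomial of the Jacobian `J₀` of the leprosy model at
the disease-free equilibrium factors as
`(-(γ+μ₁) - λ) * (λ² + ((δ+μ₁)+(y+μ₂)) λ + (δ+μ₁)(y+μ₂)(1 - R₀))`. -/
theorem leprosy_charpoly_at_E0
    (ω β γ μ₁ δ α y μ₂ : ℝ)
    (hω : 0 < ω) (hβ : 0 < β) (hγ : 0 < γ) (hμ₁ : 0 < μ₁)
    (hδ : 0 < δ) (hα : 0 < α) (hy : 0 < y) (hμ₂ : 0 < μ₂)
    (R₀ : ℝ) (hR₀ : R₀ = α * β * ω / ((γ + μ₁) * (δ + μ₁) * (y + μ₂)))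
    (J₀ : Matrix (Fin 3) (Fin 3) ℝ)
    (hJ₀ : J₀ = !![-(γ + μ₁), 0, -(β * ω) / (γ + μ₁);
                   0, -(δ + μ₁), β * ω / (γ + μ₁);
                   0, α, -(y + μ₂)]) :
    ∀ lam : ℝ,
      (J₀ - lam • (1 : Matrix (Fin 3) (Fin 3) ℝ)).det =
        (-(γ + μ₁) - lam) *
          (lam ^ 2 + ((δ + μ₁) + (y + μ₂)) * lam +
            (δ + μ₁) * (y + μ₂) * (1 - R₀)) := by
  intro lam
  have h1 : γ + μ₁ ≠ 0 := by positivity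
  have h2 : δ + μ₁ ≠ 0 := by positivity
  have h3 : y + μ₂ ≠ 0 := by positivity
  subst hJ₀ hR₀
  have hM : (!![-(γ + μ₁), 0, -(β * ω) / (γ + μ₁);
                0, -(δ + μ₁), β * ω / (γ + μ₁);
                0, α, -(y + μ₂)] - lam • (1 : Matrix (Fin 3) (Fin 3) ℝ)) =
      !![-(γ + μ₁) - lam, 0, -(β * ω) / (γ + μ₁);
         0, -(δ + μ₁) - lam, β * ω / (γ + μ₁);
         0, α, -(y + μ₂) - lam] := by
    ext i j
    fin_cases i <;> fin_cases j <;> simp [Matrix.one_apply]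
  rw [hM, Matrix.det_fin_three]
  simp only [Matrix.of_apply, Matrix.cons_val', Matrix.cons_val_zero, Matrix.cons_val_one,
    Matrix.head_cons, Matrix.empty_val', Matrix.cons_val_fin_one, Matrix.cons_val_two,
    Matrix.tail_cons, Matrix.head_fin_const]
  field_simp
  ring
end

section
/- With positive parameters ω, β, γ, μ₁, δ, α, y, μ₂ and R₀ = αβω/((γ+μ₁)(δ+μ₁)(y+μ₂)): if R₀ < 1 then every complex eigenvalue of the Jacobian J₀ at the disease-free equilibrium (the matrix with rows (−(γ+μ₁), 0, −βω/(γ+μ₁)), (0, −(δ+μ₁), βω/(γ+μ₁)), (0, α, −(y+μ₂))) has negative real part, and if R₀ > 1 then J₀ has a positive real eigenvalue. In particular the disease-free equilibrium is linearly asymptotically stable for R₀ < 1 and linearly unstable for R₀ > 1. -/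
/-- Linear stability of the disease-free equilibrium: if `R₀ < 1`, every complex
eigenvalue of the Jacobian `J₀` has negative real part; if `R₀ > 1`, `J₀` has a
positive real eigenvalue. -/
theorem leprosy_E0_linear_stability
    (ω β γ μ₁ δ α y μ₂ : ℝ)
    (hω : 0 < ω) (hβ : 0 < β) (hγ : 0 < γ) (hμ₁ : 0 < μ₁)
    (hδ : 0 < δ) (hα : 0 < α) (hy : 0 < y) (hμ₂ : 0 < μ₂)
    (R₀ : ℝ) (hR₀ : R₀ = α * β * ω / ((γ + μ₁) * (δ + μ₁) * (y + μ₂)))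
    (J₀ : Matrix (Fin 3) (Fin 3) ℝ)
    (hJ₀ : J₀ = !![-(γ + μ₁), 0, -(β * ω) / (γ + μ₁);
                   0, -(δ + μ₁), β * ω / (γ + μ₁);
                   0, α, -(y + μ₂)]) :
    (R₀ < 1 →
      ∀ z : ℂ, z ∈ spectrum ℂ (J₀.map (Complex.ofReal)) → z.re < 0) ∧
    (1 < R₀ →
      ∃ lam : ℝ, 0 < lam ∧ (lam : ℂ) ∈ spectrum ℂ (J₀.map (Complex.ofReal))) := by
  have ha : 0 < γ + μ₁ := by linarith
  have hd : 0 < δ + μ₁ := by linarith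
  have he : 0 < y + μ₂ := by linarith
  set a : ℝ := γ + μ₁ with ha'
  set d : ℝ := δ + μ₁ with hd'
  set e : ℝ := y + μ₂ with he'
  set k : ℝ := β * ω / a with hk'
  have hk : 0 < k := by positivity
  have hak : a * k = β * ω := by rw [hk']; field_simp
  -- spectrum characterization
  have hmem : ∀ z : ℂ, z ∈ spectrum ℂ (J₀.map Complex.ofReal) ↔
      (z + a) * ((z + d) * (z + e) - (α : ℂ) * k) = 0 := by
    intro z
    have hJ : J₀ = !![-a, 0, -k; 0, -d, k; 0, α, -e] := by
      rw [hJ₀]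
      congr 1 <;> simp [hk', neg_div]
    rw [hJ, spectrum.mem_iff, Matrix.isUnit_iff_isUnit_det, isUnit_iff_ne_zero, not_not]
    have hdet : ((algebraMap ℂ (Matrix (Fin 3) (Fin 3) ℂ)) z -
        (!![-a, 0, -k; 0, -d, k; 0, α, -e] : Matrix (Fin 3) (Fin 3) ℝ).map Complex.ofReal).det
        = (z + a) * ((z + d) * (z + e) - (α : ℂ) * k) := by
      simp [Matrix.det_fin_three, Matrix.algebraMap_eq_diagonal, Matrix.vecHead, Matrix.vecTail]
      ring
    rw [hdet]
  have hRform : R₀ * (a * d * e) = α * (a * k) := by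
    rw [hR₀, hak]
    field_simp
  clear hJ₀ hR₀
  constructor
  · -- R₀ < 1 : all eigenvalues have negative real part
    intro hR z hz
    have hc : α * k < d * e := by
      have h1 : R₀ * (a * d * e) < 1 * (a * d * e) := by
        apply mul_lt_mul_of_pos_right hR
        positivity
      rw [hRform, one_mul] at h1
      have := (mul_lt_mul_iff_right₀ ha).mp (by nlinarith : a * (α * k) < a * (d * e))
      exact this
    rw [hmem z] at hz
    rcases mul_eq_zero.mp hz with h1 | h2
    · -- z = -a
      have : z = -(a : ℂ) := by linear_combination h1
      rw [this]
      simpa using ha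
    · -- quadratic root
      set x : ℝ := z.re with hx
      set Y : ℝ := z.im with hY
      have hre : (x + d) * (x + e) - Y * Y - α * k = 0 := by
        have := congrArg Complex.re h2
        simpa [Complex.add_re, Complex.mul_re, Complex.add_im, Complex.mul_im,
          Complex.sub_re, Complex.ofReal_re, Complex.ofReal_im] using this
      have him : (x + d) * Y + Y * (x + e) = 0 := by
        have := congrArg Complex.im h2
        simpa [Complex.add_re, Complex.mul_re, Complex.add_im, Complex.mul_im,
          Complex.sub_im, Complex.ofReal_re, Complex.ofReal_im] using this
      by_contra hxe
      push_neg at hxe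
      rcases eq_or_ne Y 0 with hY0 | hY0
      · rw [hY0] at hre
        nlinarith
      · have h2x : (x + d) + (x + e) = 0 := by
          rcases mul_eq_zero.mp (show ((x + d) + (x + e)) * Y = 0 by nlinarith [him]) with h | h
          · exact h
          · exact absurd h hY0
        nlinarith
  · -- R₀ > 1 : positive real eigenvalue
    intro hR
    have hc : d * e < α * k := by
      have h1 : 1 * (a * d * e) < R₀ * (a * d * e) := by
        apply mul_lt_mul_of_pos_right hR
        positivity
      rw [hRform, one_mul] at h1
      exact (mul_lt_mul_iff_right₀ ha).mp (by linarith [h1] : a * (d * e) < a * (α * k))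
    set b : ℝ := d + e with hb'
    set c : ℝ := d * e - α * k with hc'
    have hcneg : c < 0 := by simp [hc']; linarith
    have hbpos : 0 < b := by positivity
    have hdisc : 0 < b ^ 2 - 4 * c := by
      have hb2 : 0 < b ^ 2 := by positivity
      linarith
    set lam : ℝ := (-b + Real.sqrt (b ^ 2 - 4 * c)) / 2 with hlam'
    have hsq : Real.sqrt (b ^ 2 - 4 * c) ^ 2 = b ^ 2 - 4 * c :=
      Real.sq_sqrt hdisc.le
    have hsgt : b < Real.sqrt (b ^ 2 - 4 * c) := by
      rw [Real.lt_sqrt hbpos.le]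
      linarith
    have hlampos : 0 < lam := by
      rw [hlam']; linarith
    have hroot : lam ^ 2 + b * lam + c = 0 := by
      rw [hlam']
      linear_combination (1 / 4 : ℝ) * hsq
    refine ⟨lam, hlampos, ?_⟩
    rw [hmem]
    have : ((lam : ℂ) + d) * ((lam : ℂ) + e) - (α : ℂ) * k = 0 := by
      have : ((lam ^ 2 + b * lam + c : ℝ) : ℂ) = 0 := by rw [hroot]; simp
      push_cast [hb', hc'] at this
      linear_combination this
    rw [this, mul_zero]
end

section
/- With positive parameters and S₀ = ω/(γ+μ₁), define the Lyapunov function U(S, I, B) = S₀·(S/S₀ − ln(S/S₀)) + I + ((δ+μ₁)/α)·B for S > 0. For any real S > 0, I, B, the derivative of U along the vector field, namely (1 − S₀/S)·(ω − βSB − γS − μ₁S) + (βSB − δI − μ₁I) + ((δ+μ₁)/α)·(αI − yB − μ₂B), equals ω·(2 − S/S₀ − S₀/S) + ((δ+μ₁)(y+μ₂)/α)·(R₀ − 1)·B, where R₀ = αβω/((γ+μ₁)(δ+μ₁)(y+μ₂)). -/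
/-- Derivative of the Lyapunov function `U` along the leprosy vector field:
for `S > 0`,
`(1 - S₀/S)·S' + I' + ((δ+μ₁)/α)·B' = ω(2 - S/S₀ - S₀/S) + ((δ+μ₁)(y+μ₂)/α)(R₀-1)B`. -/
theorem leprosy_lyapunov_derivative_identity
    (ω β γ μ₁ δ α y μ₂ : ℝ)
    (hω : 0 < ω) (hβ : 0 < β) (hγ : 0 < γ) (hμ₁ : 0 < μ₁)
    (hδ : 0 < δ) (hα : 0 < α) (hy : 0 < y) (hμ₂ : 0 < μ₂)
    (S₀ : ℝ) (hS₀ : S₀ = ω / (γ + μ₁))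
    (R₀ : ℝ) (hR₀ : R₀ = α * β * ω / ((γ + μ₁) * (δ + μ₁) * (y + μ₂))) :
    ∀ S I B : ℝ, 0 < S →
      (1 - S₀ / S) * (ω - β * S * B - γ * S - μ₁ * S) +
        (β * S * B - δ * I - μ₁ * I) +
        ((δ + μ₁) / α) * (α * I - y * B - μ₂ * B) =
      ω * (2 - S / S₀ - S₀ / S) +
        ((δ + μ₁) * (y + μ₂) / α) * (R₀ - 1) * B := by
  intro S I B hS
  have hγμ : (γ + μ₁) ≠ 0 := by positivity
  have hδμ : (δ + μ₁) ≠ 0 := by positivity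
  have hyμ : (y + μ₂) ≠ 0 := by positivity
  have hα' : α ≠ 0 := ne_of_gt hα
  have hS' : S ≠ 0 := ne_of_gt hS
  subst hS₀ hR₀
  field_simp
  ring
end

section
/- With positive parameters, S₀ = ω/(γ+μ₁), and R₀ = αβω/((γ+μ₁)(δ+μ₁)(y+μ₂)) ≤ 1: for every S > 0 and B ≥ 0, the quantity ω·(2 − S/S₀ − S₀/S) + ((δ+μ₁)(y+μ₂)/α)·(R₀ − 1)·B is ≤ 0, with equality only if S = S₀ and (R₀ − 1)·B = 0. Consequently, along any solution (S(t), I(t), B(t)) of the system with S(t) > 0 and B(t) ≥ 0, the function t ↦ U(S(t), I(t), B(t)), with U(S,I,B) = S₀(S/S₀ − ln(S/S₀)) + I + ((δ+μ₁)/α)B, is nonincreasing. -/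
/-- If `R₀ ≤ 1`, the Lyapunov derivative expression is nonpositive (with equality
only if `S = S₀` and `(R₀-1)B = 0`), and consequently `t ↦ U(S t, I t, B t)` is
nonincreasing along any solution with `S > 0` and `B ≥ 0`. -/
theorem leprosy_lyapunov_nonincreasing
    (ω β γ μ₁ δ α y μ₂ : ℝ)
    (hω : 0 < ω) (hβ : 0 < β) (hγ : 0 < γ) (hμ₁ : 0 < μ₁)
    (hδ : 0 < δ) (hα : 0 < α) (hy : 0 < y) (hμ₂ : 0 < μ₂)
    (S₀ : ℝ) (hS₀ : S₀ = ω / (γ + μ₁))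
    (R₀ : ℝ) (hR₀ : R₀ = α * β * ω / ((γ + μ₁) * (δ + μ₁) * (y + μ₂)))
    (hR₀le : R₀ ≤ 1) :
    (∀ S B : ℝ, 0 < S → 0 ≤ B →
      (ω * (2 - S / S₀ - S₀ / S) +
        ((δ + μ₁) * (y + μ₂) / α) * (R₀ - 1) * B ≤ 0 ∧
       (ω * (2 - S / S₀ - S₀ / S) +
          ((δ + μ₁) * (y + μ₂) / α) * (R₀ - 1) * B = 0 →
        S = S₀ ∧ (R₀ - 1) * B = 0))) ∧
    (∀ S I B : ℝ → ℝ,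
      (∀ t ∈ Set.Ici (0 : ℝ),
        HasDerivAt S (ω - β * S t * B t - γ * S t - μ₁ * S t) t) →
      (∀ t ∈ Set.Ici (0 : ℝ),
        HasDerivAt I (β * S t * B t - δ * I t - μ₁ * I t) t) →
      (∀ t ∈ Set.Ici (0 : ℝ),
        HasDerivAt B (α * I t - y * B t - μ₂ * B t) t) →
      (∀ t ∈ Set.Ici (0 : ℝ), 0 < S t) →
      (∀ t ∈ Set.Ici (0 : ℝ), 0 ≤ B t) →
      AntitoneOn (fun t =>
        S₀ * (S t / S₀ - Real.log (S t / S₀)) + I t + ((δ + μ₁) / α) * B t)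
        (Set.Ici (0 : ℝ))) := by
  have hγμ : 0 < γ + μ₁ := by linarith
  have hS₀pos : 0 < S₀ := by rw [hS₀]; positivity
  have hc : 0 < (δ + μ₁) * (y + μ₂) / α := by positivity
  -- Part 1
  have part1 : ∀ S B : ℝ, 0 < S → 0 ≤ B →
      (ω * (2 - S / S₀ - S₀ / S) +
        ((δ + μ₁) * (y + μ₂) / α) * (R₀ - 1) * B ≤ 0 ∧
       (ω * (2 - S / S₀ - S₀ / S) +
          ((δ + μ₁) * (y + μ₂) / α) * (R₀ - 1) * B = 0 →
        S = S₀ ∧ (R₀ - 1) * B = 0)) := by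
    intro S B hS hB
    have hkey : ω * (2 - S / S₀ - S₀ / S) = -(ω * (S - S₀) ^ 2 / (S * S₀)) := by
      field_simp
      ring
    have ha : ω * (2 - S / S₀ - S₀ / S) ≤ 0 := by
      rw [hkey]
      have : 0 ≤ ω * (S - S₀) ^ 2 / (S * S₀) := by positivity
      linarith
    have hb : ((δ + μ₁) * (y + μ₂) / α) * (R₀ - 1) * B ≤ 0 := by
      have h1 : R₀ - 1 ≤ 0 := by linarith
      have := mul_nonneg (mul_nonneg hc.le (neg_nonneg.mpr h1)) hB
      nlinarith
    refine ⟨by linarith, fun heq => ?_⟩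
    have ha0 : ω * (2 - S / S₀ - S₀ / S) = 0 := by linarith
    have hb0 : ((δ + μ₁) * (y + μ₂) / α) * (R₀ - 1) * B = 0 := by linarith
    constructor
    · rw [hkey] at ha0
      have h2 : ω * (S - S₀) ^ 2 / (S * S₀) = 0 := by linarith
      have h3 : (S - S₀) ^ 2 = 0 := by
        by_contra h
        have h4 : 0 < (S - S₀) ^ 2 := lt_of_le_of_ne (sq_nonneg _) (Ne.symm h)
        have : 0 < ω * (S - S₀) ^ 2 / (S * S₀) := by positivity
        linarith
      have := pow_eq_zero_iff (n := 2) (by norm_num) |>.mp h3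
      linarith [sub_eq_zero.mp this]
    · rw [mul_assoc] at hb0
      rcases mul_eq_zero.mp hb0 with h | h
      · exact absurd h (ne_of_gt hc)
      · exact h
  refine ⟨part1, ?_⟩
  intro S I B hS' hI' hB' hSpos hBnn
  set c : ℝ := (δ + μ₁) / α with hcdef
  -- the derivative of U at each t ∈ Ici 0
  have hU : ∀ t ∈ Set.Ici (0 : ℝ),
      HasDerivAt (fun t =>
        S₀ * (S t / S₀ - Real.log (S t / S₀)) + I t + c * B t)
        (ω * (2 - S t / S₀ - S₀ / S t) +
          ((δ + μ₁) * (y + μ₂) / α) * (R₀ - 1) * B t) t := by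
    intro t ht
    have hSt := hSpos t ht
    have hSd := hS' t ht
    have hId := hI' t ht
    have hBd := hB' t ht
    have hdiv : HasDerivAt (fun t => S t / S₀)
        ((ω - β * S t * B t - γ * S t - μ₁ * S t) / S₀) t := hSd.div_const S₀
    have hne : S t / S₀ ≠ 0 := by positivity
    have hlog := hdiv.log hne
    have h1 := ((hdiv.sub hlog).const_mul S₀).add hId |>.add (hBd.const_mul c)
    refine h1.congr_deriv ?_
    rw [hS₀, hR₀, hcdef]
    have h2 : S t / (ω / (γ + μ₁)) ≠ 0 := by positivity
    field_simp
    ring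
  have hconv : Convex ℝ (Set.Ici (0 : ℝ)) := convex_Ici 0
  refine antitoneOn_of_deriv_nonpos hconv ?_ ?_ ?_
  · intro t ht
    exact ((hU t ht).continuousAt).continuousWithinAt
  · intro t ht
    rw [interior_Ici] at ht
    exact ((hU t (Set.mem_Ici.mpr (le_of_lt ht))).differentiableAt).differentiableWithinAt
  · intro t ht
    rw [interior_Ici] at ht
    have ht' : t ∈ Set.Ici (0 : ℝ) := Set.mem_Ici.mpr (le_of_lt ht)
    rw [(hU t ht').deriv]
    exact (part1 (S t) (B t) (hSpos t ht') (hBnn t ht')).1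
end

section
/- Let F and V be the 2×2 real matrices F = [[0, βω/(γ+μ₁)], [0, 0]] and V = [[δ+μ₁, 0], [−α, y+μ₂]], with all parameters positive. Then V is invertible, and the characteristic polynomial of the next-generation matrix F·V⁻¹ is X·(X − R₀) where R₀ = αβω/((γ+μ₁)(δ+μ₁)(y+μ₂)); hence the eigenvalues of F·V⁻¹ are 0 and R₀, and its spectral radius equals R₀. -/
open Polynomial

/-- Next-generation matrix computation of `R₀`: `V` is invertible, the
characteristic polynomial of `F·V⁻¹` is `X (X - R₀)`, its spectrum is
`{0, R₀}`, and its spectral radius (largest eigenvalue in absolute value)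
equals `R₀`. -/
theorem leprosy_next_generation_matrix
    (ω β γ μ₁ δ α y μ₂ : ℝ)
    (hω : 0 < ω) (hβ : 0 < β) (hγ : 0 < γ) (hμ₁ : 0 < μ₁)
    (hδ : 0 < δ) (hα : 0 < α) (hy : 0 < y) (hμ₂ : 0 < μ₂)
    (R₀ : ℝ) (hR₀ : R₀ = α * β * ω / ((γ + μ₁) * (δ + μ₁) * (y + μ₂)))
    (F V : Matrix (Fin 2) (Fin 2) ℝ)
    (hF : F = !![0, β * ω / (γ + μ₁); 0, 0])
    (hV : V = !![δ + μ₁, 0; -α, y + μ₂]) :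
    IsUnit V ∧
    (F * V⁻¹).charpoly = X * (X - C R₀) ∧
    spectrum ℝ (F * V⁻¹) = {0, R₀} ∧
    IsGreatest ((fun lam => |lam|) '' spectrum ℝ (F * V⁻¹)) R₀ := by
  have h1 : (0:ℝ) < γ + μ₁ := by linarith
  have h2 : (0:ℝ) < δ + μ₁ := by linarith
  have h3 : (0:ℝ) < y + μ₂ := by linarith
  have hR₀pos : 0 < R₀ := by
    rw [hR₀]; positivity
  have hVinv : V⁻¹ = !![1 / (δ + μ₁), 0;
      α / ((δ + μ₁) * (y + μ₂)), 1 / (y + μ₂)] := by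
    apply Matrix.inv_eq_right_inv
    rw [hV]
    ext i j
    fin_cases i <;> fin_cases j <;>
      simp [Matrix.mul_apply, Fin.sum_univ_two] <;> field_simp <;> ring
  have hM : F * V⁻¹ = !![R₀, β * ω / ((γ + μ₁) * (y + μ₂)); 0, 0] := by
    rw [hF, hVinv]
    ext i j
    fin_cases i <;> fin_cases j <;>
      simp [Matrix.mul_apply, Fin.sum_univ_two, hR₀] <;> field_simp <;> ring
  have hVunit : IsUnit V := by
    rw [Matrix.isUnit_iff_isUnit_det, hV, Matrix.det_fin_two_of, isUnit_iff_ne_zero]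
    nlinarith
  have hchar : (F * V⁻¹).charpoly = X * (X - C R₀) := by
    rw [hM, Matrix.charpoly, Matrix.det_fin_two]
    simp [Matrix.charmatrix_apply_eq, Matrix.charmatrix_apply_ne]
    ring
  have hspec : spectrum ℝ (F * V⁻¹) = {0, R₀} := by
    ext μ
    rw [spectrum.mem_iff, Matrix.isUnit_iff_isUnit_det, isUnit_iff_ne_zero, not_ne_iff, hM]
    have : ((algebraMap ℝ (Matrix (Fin 2) (Fin 2) ℝ)) μ -
        !![R₀, β * ω / ((γ + μ₁) * (y + μ₂)); 0, 0]).det = μ * (μ - R₀) := by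
      rw [Algebra.algebraMap_eq_smul_one]
      rw [show (μ • (1 : Matrix (Fin 2) (Fin 2) ℝ) -
          !![R₀, β * ω / ((γ + μ₁) * (y + μ₂)); 0, 0]) =
          !![μ - R₀, -(β * ω / ((γ + μ₁) * (y + μ₂))); 0, μ] by
        ext i j; fin_cases i <;> fin_cases j <;>
          simp [Matrix.one_apply, Matrix.smul_apply]]
      rw [Matrix.det_fin_two_of]; ring
    rw [this, mul_eq_zero, sub_eq_zero]
    simp [Set.mem_insert_iff]
  refine ⟨hVunit, hchar, hspec, ?_, ?_⟩
  · rw [hspec]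
    exact ⟨R₀, Or.inr rfl, abs_of_pos hR₀pos⟩
  · rintro x ⟨lam, hlam, rfl⟩
    rw [hspec] at hlam
    rcases hlam with rfl | rfl
    · simpa using hR₀pos.le
    · exact (abs_of_pos hR₀pos).le
end
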